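/- Let u ∈ S_n and let D ∈ PD(u) be any pipe dream for u. Then wt(D) ≤_revdom code(u), i.e., for every 1 ≤ ℓ ≤ n, the sum of the entries of wt(D) in positions ℓ, ℓ+1, …, n is at most the sum c_ℓ(u) + c_{ℓ+1}(u) + ⋯ + c_n(u), where both tuples are padded with zeros to length n. -/

import Mathlib

open scoped Classical

/-- The Lehmer code of a permutation of `ℕ` (0-indexed):
`lehmerCode w i = #{j | j > i ∧ w j < w i}`. -/
noncomputable def lehmerCode (w : Equiv.Perm ℕ) (i : ℕ) : ℕ :=
  Set.ncard {j | i < j ∧ w j < w i}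

/-- The number of inversions of a permutation of `ℕ`. -/
noncomputable def inversions (w : Equiv.Perm ℕ) : ℕ :=
  Set.ncard {p : ℕ × ℕ | p.1 < p.2 ∧ w p.2 < w p.1}

/-- The word of a pipe-dream candidate `D ⊆ Δ_n` (0-indexed positions): read the rows
top to bottom and each row from right to left; a cross at `(i, j)` contributes the
letter `i + j` (this is the letter `i + j - 1` in 1-indexed conventions). -/
def pdWord (n : ℕ) (D : Finset (ℕ × ℕ)) : List ℕ :=
  ((List.range n).map fun i =>
    (((List.range n).reverse.filter fun j => decide ((i, j) ∈ D)).map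
      fun j => i + j)).flatten

/-- The permutation traced out by the pipes of `D`: the product of the simple
transpositions given by the word of `D`. -/
def pdPerm (n : ℕ) (D : Finset (ℕ × ℕ)) : Equiv.Perm ℕ :=
  ((pdWord n D).map fun k => Equiv.swap k (k + 1)).prod

/-- `D` is a (reduced) pipe dream for `u` inside the staircase
`Δ_n = {(i,j) : i + j + 1 ≤ n}` (0-indexed): the pipes trace out the permutation `u`
(the pipe entering the top of column `j` exits the left edge in row `i` with `u i = j`),
and no two pipes cross more than once, i.e. `#D = ℓ(u)`. -/
def IsPipeDream (n : ℕ) (u : Equiv.Perm ℕ) (D : Finset (ℕ × ℕ)) : Prop :=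
  (∀ p ∈ D, p.1 + p.2 + 1 ≤ n) ∧ pdPerm n D = u ∧ D.card = inversions u

/-- The weight of a pipe dream: `wt D i` is the number of crosses in (0-indexed) row `i`. -/
def wt (D : Finset (ℕ × ℕ)) (i : ℕ) : ℕ := (D.filter fun p => p.1 = i).card
namespace PDAux

/-- Inversion set. -/
def I (σ : Equiv.Perm ℕ) : Set (ℕ × ℕ) := {p | p.1 < p.2 ∧ σ p.2 < σ p.1}

lemma inversions_eq (σ : Equiv.Perm ℕ) : inversions σ = (I σ).ncard := rfl

lemma maps_lt {σ : Equiv.Perm ℕ} {m : ℕ} (h : ∀ i, m ≤ i → σ i = i) {i : ℕ}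
    (hi : i < m) : σ i < m := by
  by_contra hc
  push_neg at hc
  have h1 : σ (σ i) = σ i := h _ hc
  have : σ i = i := σ.injective h1
  omega

lemma mem_I_lt {σ : Equiv.Perm ℕ} {m : ℕ} (h : ∀ i, m ≤ i → σ i = i) {p : ℕ × ℕ}
    (hp : p ∈ I σ) : p.1 < m ∧ p.2 < m := by
  obtain ⟨h1, h2⟩ := hp
  have hp2 : p.2 < m := by
    by_contra hc
    push_neg at hc
    have e2 : σ p.2 = p.2 := h _ hc
    rcases lt_or_ge p.1 m with hl | hl
    · have := maps_lt h hl
      omega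
    · have e1 : σ p.1 = p.1 := h _ hl
      omega
  exact ⟨lt_trans h1 hp2, hp2⟩

lemma I_finite {σ : Equiv.Perm ℕ} {m : ℕ} (h : ∀ i, m ≤ i → σ i = i) :
    (I σ).Finite := by
  apply Set.Finite.subset ((Set.finite_Iio m).prod (Set.finite_Iio m))
  intro p hp
  exact (mem_I_lt h hp)

/-- The inversion set as a finset inside `[0,m) × [0,m)`. -/
noncomputable def IF (m : ℕ) (σ : Equiv.Perm ℕ) : Finset (ℕ × ℕ) :=
  (Finset.range m ×ˢ Finset.range m).filter fun p => p.1 < p.2 ∧ σ p.2 < σ p.1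

lemma mem_IF {m : ℕ} {σ : Equiv.Perm ℕ} {p : ℕ × ℕ} :
    p ∈ IF m σ ↔ p.1 < m ∧ p.2 < m ∧ p.1 < p.2 ∧ σ p.2 < σ p.1 := by
  simp [IF, Finset.mem_filter, Finset.mem_product, and_assoc]

lemma inversions_eq_IF {σ : Equiv.Perm ℕ} {m : ℕ} (h : ∀ i, m ≤ i → σ i = i) :
    inversions σ = (IF m σ).card := by
  rw [inversions_eq, ← Set.ncard_coe_finset]
  congr 1
  ext p
  simp only [Finset.coe_filter, Set.mem_setOf_eq, Finset.mem_coe, mem_IF]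
  constructor
  · intro hp
    obtain ⟨h1, h2⟩ := mem_I_lt h hp
    exact ⟨h1, h2, hp.1, hp.2⟩
  · rintro ⟨_, _, h3, h4⟩; exact ⟨h3, h4⟩

lemma swap_lt {k a b : ℕ} (hab : a < b)
    (h : Equiv.swap k (k + 1) b < Equiv.swap k (k + 1) a) : a = k ∧ b = k + 1 := by
  simp only [Equiv.swap_apply_def] at h
  split_ifs at h <;> omega

lemma inversions_swap_mul_le {σ : Equiv.Perm ℕ} {m : ℕ} (h : ∀ i, m ≤ i → σ i = i)
    (k : ℕ) : inversions (Equiv.swap k (k + 1) * σ) ≤ inversions σ + 1 := by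
  set q : ℕ × ℕ := (σ⁻¹ k, σ⁻¹ (k + 1)) with hq
  have hsub : I (Equiv.swap k (k + 1) * σ) ⊆ insert q (I σ) := by
    rintro ⟨i, j⟩ ⟨hij, hlt⟩
    simp only [Equiv.Perm.mul_apply] at hlt
    by_cases hσ : σ j < σ i
    · exact Set.mem_insert_of_mem _ ⟨hij, hσ⟩
    · push_neg at hσ
      have hne : σ i ≠ σ j := fun e => (Nat.ne_of_lt hij) (σ.injective e)
      have hlt' : σ i < σ j := lt_of_le_of_ne hσ hne
      obtain ⟨h1, h2⟩ := swap_lt hlt' hlt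
      left
      have e1 : σ⁻¹ k = i := by rw [← h1]; exact σ.symm_apply_apply i
      have e2 : σ⁻¹ (k + 1) = j := by rw [← h2]; exact σ.symm_apply_apply j
      rw [hq, e1, e2]
  calc inversions (Equiv.swap k (k + 1) * σ) = (I _).ncard := rfl
    _ ≤ (insert q (I σ)).ncard :=
        Set.ncard_le_ncard hsub ((I_finite h).insert q)
    _ ≤ (I σ).ncard + 1 := Set.ncard_insert_le q _
    _ = inversions σ + 1 := by rw [inversions_eq]

/-- Product of simple transpositions of a word. -/
def pp (L : List ℕ) : Equiv.Perm ℕ := (L.map fun k => Equiv.swap k (k + 1)).prod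

lemma pp_nil : pp [] = 1 := rfl

lemma pp_cons (a : ℕ) (t : List ℕ) : pp (a :: t) = Equiv.swap a (a + 1) * pp t := by
  simp [pp]

lemma pp_append (L₁ L₂ : List ℕ) : pp (L₁ ++ L₂) = pp L₁ * pp L₂ := by
  simp [pp]

lemma pp_fix_ge {L : List ℕ} {m : ℕ} (hL : ∀ k ∈ L, k + 1 < m) {i : ℕ}
    (hi : m ≤ i) : pp L i = i := by
  induction L with
  | nil => rfl
  | cons a t ih =>
    have ha := hL a (by simp)
    rw [pp_cons, Equiv.Perm.mul_apply, ih (fun k hk => hL k (by simp [hk]))]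
    exact Equiv.swap_apply_of_ne_of_ne (by omega) (by omega)

lemma pp_fix_lt {L : List ℕ} {l : ℕ} (hL : ∀ k ∈ L, l ≤ k) {i : ℕ}
    (hi : i < l) : pp L i = i := by
  induction L with
  | nil => rfl
  | cons a t ih =>
    have ha := hL a (by simp)
    rw [pp_cons, Equiv.Perm.mul_apply, ih (fun k hk => hL k (by simp [hk]))]
    exact Equiv.swap_apply_of_ne_of_ne (by omega) (by omega)

lemma inversions_one : inversions 1 = 0 := by
  rw [inversions_eq]
  convert Set.ncard_empty (ℕ × ℕ)
  ext p
  simp only [I, Set.mem_setOf_eq, Equiv.Perm.one_apply, Set.mem_empty_iff_false, iff_false]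
  omega

lemma inversions_pp_le {L : List ℕ} {m : ℕ} (hL : ∀ k ∈ L, k + 1 < m) :
    inversions (pp L) ≤ L.length := by
  induction L with
  | nil => simp [pp_nil, inversions_one]
  | cons a t ih =>
    rw [pp_cons]
    calc inversions (Equiv.swap a (a + 1) * pp t)
        ≤ inversions (pp t) + 1 :=
          inversions_swap_mul_le (fun i hi => pp_fix_ge (fun k hk => hL k (by simp [hk])) hi) a
      _ ≤ t.length + 1 := by
          have := ih (fun k hk => hL k (by simp [hk]))
          omega
      _ = (a :: t).length := by simp



lemma sum_map_range' (f : ℕ → ℕ) : ∀ (b a : ℕ),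
    ((List.range' a b).map f).sum = ∑ i ∈ Finset.Ico a (a + b), f i := by
  intro b
  induction b with
  | zero => simp
  | succ b ih =>
    intro a
    rw [List.range'_succ, List.map_cons, List.sum_cons, ih,
      Finset.sum_eq_sum_Ico_succ_bot (by omega : a < a + (b + 1)),
      show a + 1 + b = a + (b + 1) by omega]

lemma flatten_len (row : ℕ → List ℕ) (lst : List ℕ) :
    ((lst.map row).flatten).length = (lst.map fun i => (row i).length).sum := by
  rw [List.length_flatten, List.map_map]
  rfl

lemma range_toFinset (n : ℕ) : (List.range n).toFinset = Finset.range n := by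
  ext j
  simp

/-- Row length equals weight. -/
lemma row_len (n : ℕ) (D : Finset (ℕ × ℕ)) (htri : ∀ p ∈ D, p.1 + p.2 + 1 ≤ n)
    (i : ℕ) :
    ((((List.range n).reverse.filter fun j => decide ((i, j) ∈ D)).map
      fun j => i + j)).length = wt D i := by
  rw [List.length_map, List.filter_reverse, List.length_reverse]
  have hnd : ((List.range n).filter fun j => decide ((i, j) ∈ D)).Nodup :=
    (List.nodup_range (n := n)).filter _
  rw [← List.toFinset_card_of_nodup hnd, List.toFinset_filter, range_toFinset]
  rw [wt]
  apply Finset.card_bij (fun j _ => (i, j))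
  · intro j hj
    simp only [Finset.mem_filter, Finset.mem_range, decide_eq_true_eq] at hj
    simp [hj.2]
  · intro a ha b hb hab
    exact (Prod.mk.injEq _ _ _ _).mp hab |>.2
  · intro p hp
    simp only [Finset.mem_filter] at hp
    refine ⟨p.2, ?_, ?_⟩
    · have := htri p hp.1
      simp only [Finset.mem_filter, Finset.mem_range, decide_eq_true_eq]
      constructor
      · omega
      · rw [← hp.2]; exact hp.1
    · rw [← hp.2]

end PDAux


open PDAux in
/-- For every pipe dream `D` for `u ∈ S_n`, the weight of `D` is dominated by the
Lehmer code of `u` in the reverse dominance order: for every (0-indexed) `l < n`,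
`Σ_{i=l}^{n-1} wt(D)_i ≤ Σ_{i=l}^{n-1} c_i(u)`. -/
theorem pipeDream_weight_le_code_revdom
    (n : ℕ) (u : Equiv.Perm ℕ) (hu : ∀ i, n ≤ i → u i = i)
    (D : Finset (ℕ × ℕ)) (hD : IsPipeDream n u D) :
    ∀ l, l < n →
      ∑ i ∈ Finset.Ico l n, wt D i ≤ ∑ i ∈ Finset.Ico l n, lehmerCode u i := by
  intro l hl
  obtain ⟨htri, hperm, hcard⟩ := hD
  set m := n + 1 with hm
  set row : ℕ → List ℕ :=
    fun i => ((List.range n).reverse.filter fun j => decide ((i, j) ∈ D)).map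
      fun j => i + j with hrow
  -- split the word into top rows (< l) and bottom rows (≥ l)
  have hrange : List.range n = List.range' 0 l ++ List.range' l (n - l) := by
    rw [List.range_eq_range', show n = (n - l) + l by omega,
      Nat.add_comm (n - l) l, ← List.range'_append (s := 0) (m := l) (n := n - l) (step := 1)]
    norm_num
  set Wt : List ℕ := ((List.range' 0 l).map row).flatten with hWt
  set Wb : List ℕ := ((List.range' l (n - l)).map row).flatten with hWb
  have hsplit : pdWord n D = Wt ++ Wb := by
    show ((List.range n).map row).flatten = _
    rw [hrange, List.map_append, List.flatten_append]
  -- letters of the word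
  have hmemD : ∀ i j : ℕ, ∀ k, k ∈ row i → ∃ j, (i, j) ∈ D ∧ k = i + j := by
    intro i j k hk
    simp only [hrow, List.mem_map, List.mem_filter, List.mem_reverse,
      List.mem_range, decide_eq_true_eq] at hk
    obtain ⟨j', ⟨_, hj'⟩, hk⟩ := hk
    exact ⟨j', hj', hk.symm⟩
  have hletT : ∀ k ∈ Wt, k + 1 < m := by
    intro k hk
    simp only [hWt, List.mem_flatten, List.mem_map] at hk
    obtain ⟨_, ⟨i, hi, rfl⟩, hk⟩ := hk
    obtain ⟨j, hjD, rfl⟩ := hmemD i 0 k hk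
    have := htri _ hjD
    omega
  have hletB : ∀ k ∈ Wb, k + 1 < m ∧ l ≤ k := by
    intro k hk
    simp only [hWb, List.mem_flatten, List.mem_map] at hk
    obtain ⟨_, ⟨i, hi, rfl⟩, hk⟩ := hk
    obtain ⟨j, hjD, rfl⟩ := hmemD i 0 _ hk
    have := htri _ hjD
    simp only [List.mem_range'] at hi
    obtain ⟨t, ht, rfl⟩ := hi
    omega
  set w : Equiv.Perm ℕ := pp Wt with hw
  set v : Equiv.Perm ℕ := pp Wb with hv
  have huv : u = w * v := by
    rw [← hperm]
    show pp (pdWord n D) = w * v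
    rw [hsplit, pp_append]
  -- fixed point facts
  have hufix : ∀ i, m ≤ i → u i = i := fun i hi => hu i (by omega)
  have hwfix : ∀ i, m ≤ i → w i = i := fun i hi => pp_fix_ge hletT hi
  have hvfix : ∀ i, m ≤ i → v i = i := fun i hi => pp_fix_ge (fun k hk => (hletB k hk).1) hi
  have hvlt : ∀ i < l, v i = i := fun i hi => pp_fix_lt (fun k hk => (hletB k hk).2) hi
  have hvge : ∀ j, l ≤ j → l ≤ v j := by
    intro j hj
    by_contra hc
    push_neg at hc
    have h1 : v (v j) = v j := hvlt _ hc
    have : v j = j := v.injective h1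
    omega
  -- lengths and weights
  have hlenT : Wt.length = ∑ i ∈ Finset.Ico 0 l, wt D i := by
    rw [hWt, flatten_len, sum_map_range']
    rw [show (0 : ℕ) + l = l by omega]
    exact Finset.sum_congr rfl fun i _ => row_len n D htri i
  have hlenB : Wb.length = ∑ i ∈ Finset.Ico l n, wt D i := by
    rw [hWb, flatten_len, sum_map_range']
    rw [show l + (n - l) = n by omega]
    exact Finset.sum_congr rfl fun i _ => row_len n D htri i
  have hDcard : D.card = ∑ i ∈ Finset.Ico 0 n, wt D i := by
    rw [← Finset.range_eq_Ico]
    apply Finset.card_eq_sum_card_fiberwise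
    intro p hp
    have := htri p hp
    simp only [Finset.mem_coe, Finset.mem_range]
    omega
  have hDsum : D.card = Wt.length + Wb.length := by
    rw [hlenT, hlenB, hDcard, ← Finset.sum_Ico_consecutive _ (by omega : 0 ≤ l) (le_of_lt hl)]
  -- inversions of u split by first coordinate
  set A : Finset (ℕ × ℕ) := (IF m u).filter fun p => p.1 < l with hA
  set B : Finset (ℕ × ℕ) := (IF m u).filter fun p => ¬ p.1 < l with hB
  have hAB : A.card + B.card = (IF m u).card :=
    Finset.card_filter_add_card_filter_not _
  have hIFu : inversions u = (IF m u).card := inversions_eq_IF hufix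
  -- A injects into inversions of w
  have hAw : A.card ≤ inversions w := by
    rw [inversions_eq_IF hwfix]
    apply Finset.card_le_card_of_injOn (fun p => (p.1, v p.2))
    · intro p hp
      simp only [hA, Finset.mem_coe, Finset.mem_filter, mem_IF] at hp
      obtain ⟨⟨h1, h2, h3, h4⟩, h5⟩ := hp
      have hvp2m : v p.2 < m := maps_lt hvfix h2
      have hp1v : p.1 < v p.2 := by
        rcases lt_or_ge p.2 l with hc | hc
        · rw [hvlt _ hc]; exact h3
        · have := hvge _ hc; omega
      have hwlt : w (v p.2) < w p.1 := by
        have e1 : u p.1 = w p.1 := by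
          rw [huv, Equiv.Perm.mul_apply, hvlt _ h5]
        have e2 : u p.2 = w (v p.2) := by
          rw [huv, Equiv.Perm.mul_apply]
        rw [← e1, ← e2]
        exact h4
      exact mem_IF.mpr ⟨h1, hvp2m, hp1v, hwlt⟩
    · intro p hp q hq hpq
      simp only [Prod.mk.injEq] at hpq
      exact Prod.ext hpq.1 (v.injective hpq.2)
  have hwlen : inversions w ≤ Wt.length := inversions_pp_le hletT
  -- B counts the tail of the Lehmer code
  have hBsum : B.card = ∑ i ∈ Finset.Ico l n, lehmerCode u i := by
    rw [Finset.card_eq_sum_card_fiberwise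
      (f := Prod.fst) (t := Finset.Ico l n) ?_]
    · apply Finset.sum_congr rfl
      intro i hi
      simp only [Finset.mem_Ico] at hi
      have hcode : lehmerCode u i =
          ((Finset.range m).filter fun j => i < j ∧ u j < u i).card := by
        rw [lehmerCode, ← Set.ncard_coe_finset]
        congr 1
        ext j
        simp only [Finset.coe_filter, Set.mem_setOf_eq, Finset.mem_range]
        constructor
        · rintro ⟨h1, h2⟩
          refine ⟨?_, h1, h2⟩
          by_contra hc
          push_neg at hc
          have hjn : n ≤ j := by omega
          have e2 : u j = j := hu _ hjn
          have : u i < n := maps_lt hu hi.2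
          omega
        · rintro ⟨_, h1, h2⟩; exact ⟨h1, h2⟩
      rw [hcode]
      apply Finset.card_bij (fun p _ => p.2)
      · intro p hp
        simp only [hB, Finset.mem_filter, mem_IF] at hp
        obtain ⟨⟨⟨h1, h2, h3, h4⟩, h5⟩, h6⟩ := hp
        simp only [Finset.mem_filter, Finset.mem_range]
        rw [← h6]
        exact ⟨h2, h3, h4⟩
      · intro p hp q hq hpq
        simp only [Finset.mem_filter] at hp hq
        exact Prod.ext (hp.2.trans hq.2.symm) hpq
      · intro j hj
        simp only [Finset.mem_filter, Finset.mem_range] at hj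
        refine ⟨(i, j), ?_, rfl⟩
        simp only [hB, Finset.mem_filter, mem_IF]
        exact ⟨⟨⟨by omega, hj.1, hj.2.1, hj.2.2⟩, by omega⟩, by simp⟩
    · intro p hp
      simp only [hB, Finset.mem_coe, Finset.mem_filter, mem_IF] at hp
      obtain ⟨⟨h1, h2, h3, h4⟩, h5⟩ := hp
      have hp1n : p.1 < n := by
        by_contra hc
        push_neg at hc
        have e1 : u p.1 = p.1 := hu _ hc
        have e2 : u p.2 = p.2 := hu _ (by omega)
        omega
      simp only [Finset.mem_coe, Finset.mem_Ico]
      omega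
  -- conclude
  rw [← hlenB, ← hBsum]
  have h1 : A.card + B.card = Wt.length + Wb.length := by
    rw [hAB, ← hIFu, ← hcard]
    exact hDsum
  omega
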